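/- Negabent versus bent: Let n ≥ 1 be even and f : F_2^n → F_2. Define h : F_2^n → F_2 by h(x) = f(x) ⊕ s_2(x), where s_2(x) = C(wt(x),2) mod 2 is the elementary symmetric Boolean polynomial of degree 2. Then f is negabent (i.e., |N_f(u)| = 1 for all u ∈ F_2^n, where N_f(u) = 2^{-n/2} Σ_x (-1)^{f(x)} (-1)^{u·x} i^{wt(x)}) if and only if h is bent (i.e., |W_h(u)| = 1 for all u ∈ F_2^n, where W_h(u) = 2^{-n/2} Σ_x (-1)^{h(x)+u·x}). -/

import Mathlib

open Complex Finset

noncomputable section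

/-- `ζ_q = exp(2πi/q)`. -/
def zetaC (q : ℕ) : ℂ := Complex.exp (2 * Real.pi * Complex.I / q)

/-- Hamming weight of a binary vector. -/
def wtv {n : ℕ} (x : Fin n → ZMod 2) : ℕ := ∑ j, (x j).val

/-- `(-1)^{u·x}` where `u·x` is the dot product over `F_2`. -/
def chr {n : ℕ} (u x : Fin n → ZMod 2) : ℂ := (-1 : ℂ) ^ (∑ j, u j * x j : ZMod 2).val

/-- `2^{-n/2}` as a complex number. -/
def nrm (n : ℕ) : ℂ := (((2 : ℝ) ^ (-(n : ℝ) / 2) : ℝ) : ℂ)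

/-- The nega-Hadamard transform of a Boolean function,
`N_f(u) = 2^{-n/2} Σ_x (-1)^{f(x)} (-1)^{u·x} i^{wt(x)}`. -/
def negaHB {n : ℕ} (f : (Fin n → ZMod 2) → ZMod 2) (u : Fin n → ZMod 2) : ℂ :=
  nrm n * ∑ x, (-1 : ℂ) ^ (f x).val * chr u x * Complex.I ^ wtv x

/-- The Walsh-Hadamard transform of a Boolean function,
`W_h(u) = 2^{-n/2} Σ_x (-1)^{h(x)+u·x}`. -/
def WHB {n : ℕ} (h : (Fin n → ZMod 2) → ZMod 2) (u : Fin n → ZMod 2) : ℂ :=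
  nrm n * ∑ x, (-1 : ℂ) ^ ((h x).val + (∑ j, u j * x j : ZMod 2).val)

lemma sq_add_sq_pow_two : ∀ (k : ℕ) (p q : ℤ), p^2 + q^2 = 2^(2*k+1) → p^2 = 2^(2*k)
  | 0, p, q, h => by
      norm_num at h
      have hp2 : p^2 ≤ 2 := by nlinarith [sq_nonneg q]
      have hq2 : q^2 ≤ 2 := by nlinarith [sq_nonneg p]
      have hp : -1 ≤ p ∧ p ≤ 1 := by constructor <;> nlinarith
      have hq : -1 ≤ q ∧ q ≤ 1 := by constructor <;> nlinarith
      obtain ⟨h1, h2⟩ := hp; obtain ⟨h3, h4⟩ := hq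
      interval_cases p <;> interval_cases q <;> simp_all
  | (k+1), p, q, h => by
      have h8 : p^2 + q^2 = 8 * 2^(2*k) := by rw [h]; ring
      rcases Int.even_or_odd p with hp | hp
      · rcases Int.even_or_odd q with hq | hq
        · obtain ⟨p', rfl⟩ := hp
          obtain ⟨q', rfl⟩ := hq
          have e : (2:ℤ)^(2*(k+1)+1) = 4 * 2^(2*k+1) := by ring
          have h' : p'^2 + q'^2 = 2^(2*k+1) := by nlinarith
          have := sq_add_sq_pow_two k p' q' h'
          have : p'^2 = 2^(2*k) := this
          have hgoal : (p'+p')^2 = 4 * 2^(2*k) := by nlinarith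
          rw [hgoal]; ring
        · exfalso
          obtain ⟨a, rfl⟩ := hp
          obtain ⟨b, rfl⟩ := hq
          have hc : 4*(a^2 + b^2 + b) + 1 = 8 * 2^(2*k) := by nlinarith
          have ht : (0:ℤ) < 2^(2*k) := by positivity
          omega
      · rcases Int.even_or_odd q with hq | hq
        · exfalso
          obtain ⟨a, rfl⟩ := hp
          obtain ⟨b, rfl⟩ := hq
          have hc : 4*(a^2 + a + b^2) + 1 = 8 * 2^(2*k) := by nlinarith
          have ht : (0:ℤ) < 2^(2*k) := by positivity
          omega
        · exfalso
          obtain ⟨a, rfl⟩ := hp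
          obtain ⟨b, rfl⟩ := hq
          have hc : 4*(a^2 + a + b^2 + b) + 2 = 8 * 2^(2*k) := by nlinarith
          have ht : (0:ℤ) < 2^(2*k) := by positivity
          omega

lemma Ipow_choose : ∀ w : ℕ, (Complex.I)^w = (-1:ℂ)^(w.choose 2) * Complex.I^(w % 2)
  | 0 => by norm_num
  | 1 => by norm_num
  | (w+2) => by
      have ih := Ipow_choose w
      have hc : (w+2).choose 2 = w.choose 2 + (2*w+1) := by
        simp [Nat.choose_succ_succ, Nat.choose_one_right]; ring
      have hm : (w+2) % 2 = w % 2 := Nat.add_mod_right w 2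
      rw [hm, hc, pow_add, pow_add, Complex.I_sq, ih]
      have : (-1:ℂ)^(2*w+1) = -1 := by
        rw [pow_succ, pow_mul, neg_one_sq, one_pow, one_mul]
      rw [this]; ring

lemma neg_one_pow_mod2 (m : ℕ) : (-1:ℂ)^m = (-1:ℂ)^((m : ZMod 2).val) := by
  rw [ZMod.val_natCast]
  conv_lhs => rw [← Nat.div_add_mod m 2]
  rw [pow_add, pow_mul, neg_one_sq, one_pow, one_mul]

lemma neg_one_pow_val_add (a b : ZMod 2) :
    (-1:ℂ)^((a+b).val) = (-1:ℂ)^a.val * (-1:ℂ)^b.val := by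
  have h : ∀ c : ZMod 2, c = 0 ∨ c = 1 := by decide
  rcases h a with ha | ha <;> rcases h b with hb | hb <;> subst ha <;> subst hb <;>
    simp [show ((1:ZMod 2)+1) = 0 from rfl, show ZMod.val (0 : ZMod 2) = 0 from rfl,
      show ZMod.val (1 : ZMod 2) = 1 from rfl]

lemma wtv_cast {n : ℕ} (x : Fin n → ZMod 2) : ((wtv x : ℕ) : ZMod 2) = ∑ j, x j := by
  unfold wtv
  push_cast
  refine Finset.sum_congr rfl fun j _ => ?_
  simp [ZMod.natCast_val, ZMod.cast_id]

lemma I_pow_two_cases : ∀ b : ℕ, b < 2 →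
    Complex.I ^ b = (1+Complex.I)/2 + (1-Complex.I)/2 * (-1:ℂ)^b
  | 0, _ => by norm_num; ring
  | 1, _ => by norm_num; ring

def Tz {n : ℕ} (g : (Fin n → ZMod 2) → ZMod 2) (u : Fin n → ZMod 2) : ℤ :=
  ∑ x, (-1:ℤ)^((g x).val + (∑ j, u j * x j : ZMod 2).val)

lemma WHB_eq {n : ℕ} (g : (Fin n → ZMod 2) → ZMod 2) (u : Fin n → ZMod 2) :
    WHB g u = nrm n * ((Tz g u : ℤ) : ℂ) := by
  unfold WHB Tz
  push_cast
  rfl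

lemma dot_add_one {n : ℕ} (u x : Fin n → ZMod 2) :
    (∑ j, (u + 1) j * x j : ZMod 2) = (∑ j, u j * x j) + ∑ j, x j := by
  rw [← Finset.sum_add_distrib]
  refine Finset.sum_congr rfl fun j _ => ?_
  simp [add_mul]

lemma nega_eq {n : ℕ} (f h : (Fin n → ZMod 2) → ZMod 2)
    (hh : ∀ x, h x = f x + (Nat.choose (wtv x) 2 : ZMod 2)) (u : Fin n → ZMod 2) :
    negaHB f u = nrm n *
      ((1+Complex.I)/2 * ((Tz h u : ℤ) : ℂ) + (1-Complex.I)/2 * ((Tz h (u + 1) : ℤ) : ℂ)) := by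
  unfold negaHB Tz
  congr 1
  push_cast
  rw [Finset.mul_sum, Finset.mul_sum, ← Finset.sum_add_distrib]
  refine Finset.sum_congr rfl fun x _ => ?_
  have e1 : Complex.I ^ wtv x = (-1:ℂ)^(((wtv x).choose 2 : ZMod 2)).val * Complex.I^(wtv x % 2) :=
    by rw [Ipow_choose (wtv x), neg_one_pow_mod2]
  have e2 : Complex.I ^ (wtv x % 2) = (1+Complex.I)/2 + (1-Complex.I)/2 * (-1:ℂ)^((wtv x : ZMod 2)).val := by
    rw [I_pow_two_cases (wtv x % 2) (Nat.mod_lt _ two_pos), ZMod.val_natCast]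
  rw [e1, e2]
  have e3 : (-1:ℂ) ^ (f x).val * chr u x * ((-1:ℂ)^(((wtv x).choose 2 : ZMod 2)).val *
      ((1+Complex.I)/2 + (1-Complex.I)/2 * (-1:ℂ)^((wtv x : ZMod 2)).val)) =
      (1+Complex.I)/2 * ((-1:ℂ)^((h x).val) * chr u x)
      + (1-Complex.I)/2 * (((-1:ℂ)^((h x).val) * chr u x) * (-1:ℂ)^((wtv x : ZMod 2)).val) := by
    rw [hh x, neg_one_pow_val_add]
    ring
  rw [e3]
  have e4 : ∀ v : Fin n → ZMod 2, (-1:ℂ)^((h x).val) * chr v x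
      = (-1:ℂ)^((h x).val + (∑ j, v j * x j : ZMod 2).val) := by
    intro v; rw [pow_add]; rfl
  rw [e4 u]
  have e5 : (-1:ℂ)^((h x).val + (∑ j, u j * x j : ZMod 2).val) * (-1:ℂ)^((wtv x : ZMod 2)).val
      = (-1:ℂ)^((h x).val + (∑ j, (u+1) j * x j : ZMod 2).val) := by
    rw [show (∑ j, (u+1) j * x j : ZMod 2) = (∑ j, u j * x j) + (wtv x : ZMod 2) from by
      rw [dot_add_one, wtv_cast]]
    rw [pow_add, pow_add, neg_one_pow_val_add]
    ring
  rw [e5]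

lemma rsq_mul (n : ℕ) : ((2:ℝ)^(-(n:ℝ)/2))^2 * (2:ℝ)^n = 1 := by
  rw [← Real.rpow_natCast ((2:ℝ)^(-(n:ℝ)/2)) 2, ← Real.rpow_mul (by norm_num : (0:ℝ) ≤ 2)]
  rw [← Real.rpow_natCast (2:ℝ) n, ← Real.rpow_add (by norm_num : (0:ℝ) < 2)]
  norm_num

lemma helper (n : ℕ) (c : ℝ) (hc : 0 ≤ c) :
    ((2:ℝ)^(-(n:ℝ)/2) * c = 1) ↔ c^2 = (2:ℝ)^n := by
  have hr : (0:ℝ) < (2:ℝ)^(-(n:ℝ)/2) := Real.rpow_pos_of_pos two_pos _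
  have hsq := rsq_mul n
  constructor
  · intro H
    have h1 : ((2:ℝ)^(-(n:ℝ)/2))^2 * c^2 = 1 := by nlinarith
    have h2 : ((2:ℝ)^(-(n:ℝ)/2))^2 * (c^2 - 2^n) = 0 := by nlinarith
    rcases mul_eq_zero.mp h2 with h3 | h3
    · exact absurd h3 (by positivity)
    · linarith
  · intro H
    have h1 : ((2:ℝ)^(-(n:ℝ)/2) * c)^2 = 1 := by rw [mul_pow, H]; exact hsq
    have h2 : 0 ≤ (2:ℝ)^(-(n:ℝ)/2) * c := by positivity
    nlinarith

lemma abs_nrm (n : ℕ) : ‖nrm n‖ = (2:ℝ)^(-(n:ℝ)/2) := by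
  unfold nrm
  rw [Complex.norm_real, Real.norm_eq_abs, abs_of_pos (Real.rpow_pos_of_pos two_pos _)]

lemma absW_iff {n : ℕ} (g : (Fin n → ZMod 2) → ZMod 2) (u : Fin n → ZMod 2) :
    ‖WHB g u‖ = 1 ↔ (Tz g u)^2 = 2^n := by
  rw [WHB_eq, norm_mul, abs_nrm]
  have h2 : ((Tz g u : ℤ) : ℂ) = (((Tz g u : ℝ)) : ℂ) := by push_cast; rfl
  rw [h2, Complex.norm_real, Real.norm_eq_abs]
  rw [helper n _ (abs_nonneg _), _root_.sq_abs]
  constructor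
  · intro H; exact_mod_cast H
  · intro H; exact_mod_cast H

lemma absN_iff {n : ℕ} (f h : (Fin n → ZMod 2) → ZMod 2)
    (hh : ∀ x, h x = f x + (Nat.choose (wtv x) 2 : ZMod 2)) (u : Fin n → ZMod 2) :
    ‖negaHB f u‖ = 1 ↔ (Tz h u)^2 + (Tz h (u+1))^2 = 2^(n+1) := by
  rw [nega_eq f h hh u]
  set a : ℝ := ((Tz h u : ℤ) : ℝ) with ha
  set b : ℝ := ((Tz h (u+1) : ℤ) : ℝ) with hb
  have hz : (1+Complex.I)/2 * ((Tz h u : ℤ) : ℂ) + (1-Complex.I)/2 * ((Tz h (u+1) : ℤ) : ℂ)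
      = (((a+b)/2 : ℝ) : ℂ) + (((a-b)/2 : ℝ) : ℂ) * Complex.I := by
    rw [ha, hb]; push_cast; ring
  rw [hz, norm_mul, abs_nrm, Complex.norm_add_mul_I]
  rw [helper n _ (Real.sqrt_nonneg _)]
  rw [Real.sq_sqrt (by positivity)]
  have e : ((a+b)/2)^2 + ((a-b)/2)^2 = (a^2+b^2)/2 := by ring
  rw [e]
  constructor
  · intro H
    have H2 : a^2 + b^2 = 2^(n+1) := by
      rw [show ((2:ℝ)^(n+1)) = 2 * 2^n from by ring]
      linarith
    rw [ha, hb] at H2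
    exact_mod_cast H2
  · intro H
    have H2 : a^2 + b^2 = ((2:ℝ))^(n+1) := by rw [ha, hb]; exact_mod_cast H
    rw [H2]; ring


/-- for even `n`, `f` is negabent iff `h = f ⊕ s₂` is bent. -/
theorem negabent_iff_bent {n : ℕ} (hn : 1 ≤ n) (hne : Even n)
    (f h : (Fin n → ZMod 2) → ZMod 2)
    (hh : ∀ x, h x = f x + (Nat.choose (wtv x) 2 : ZMod 2)) :
    (∀ u : Fin n → ZMod 2, ‖negaHB f u‖ = 1) ↔
    (∀ u : Fin n → ZMod 2, ‖WHB h u‖ = 1) := by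
  constructor
  · intro H u
    have h1 : (Tz h u)^2 + (Tz h (u+1))^2 = 2^(n+1) := (absN_iff f h hh u).mp (H u)
    obtain ⟨k, hk⟩ := hne
    have hk1 : n + 1 = 2*k + 1 := by omega
    rw [hk1] at h1
    have h2 := sq_add_sq_pow_two k _ _ h1
    rw [absW_iff]
    exact h2.trans (by rw [show 2*k = n from by omega])
  · intro H u
    rw [absN_iff f h hh u]
    have h1 := (absW_iff h u).mp (H u)
    have h2 := (absW_iff h (u+1)).mp (H (u+1))
    rw [h1, h2]; ring


end
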